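/- Let (ω_n)_{n≥0} be i.i.d. random variables with values in a measurable space E, let g : E → (0,∞) be measurable and set V_n = g(ω_n). Fix t ≥ 0, integers 1 ≤ k ≤ ℓ, and let A_ℓ = {V_0 + ⋯ + V_{ℓ−1} ≤ t < V_0 + ⋯ + V_ℓ}. Then for every measurable φ : E^k → [0,∞], E[φ(ω_0, …, ω_{k−1}) · 1_{A_ℓ}] = E[φ(ω_{ℓ−1}, …, ω_{ℓ−k}) · 1_{A_ℓ}]. -/

import Mathlib

open MeasureTheory ProbabilityTheory
open scoped ENNReal NNReal

/-- **Exchangeability identity** (Statement 0).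
Let `(ω n)` be i.i.d. `E`-valued random variables, `g : E → (0,∞)` measurable,
`V n = g (ω n)`. Fix `t ≥ 0` and `1 ≤ k ≤ ℓ`, and consider the event
`A_ℓ = {V 0 + ⋯ + V (ℓ-1) ≤ t < V 0 + ⋯ + V ℓ}`.  Then for every measurable
`φ : E^k → [0,∞]`,
`E[φ(ω 0, …, ω (k-1)) 1_{A_ℓ}] = E[φ(ω (ℓ-1), …, ω (ℓ-k)) 1_{A_ℓ}]`. -/
theorem exchangeability_identity_fixed_level
    {Ω E : Type*} [MeasurableSpace Ω] [MeasurableSpace E]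
    (μ : Measure Ω) [IsProbabilityMeasure μ]
    (ω : ℕ → Ω → E) (hmeas : ∀ n, Measurable (ω n))
    (hindep : iIndepFun ω μ)
    (hident : ∀ n, Measure.map (ω n) μ = Measure.map (ω 0) μ)
    (g : E → ℝ) (hg : Measurable g) (hgpos : ∀ e, 0 < g e)
    (t : ℝ) (ht : 0 ≤ t) (k ℓ : ℕ) (hk : 1 ≤ k) (hkl : k ≤ ℓ)
    (φ : (Fin k → E) → ℝ≥0∞) (hφ : Measurable φ) :
    ∫⁻ x in {x | (∑ i ∈ Finset.range ℓ, g (ω i x)) ≤ t ∧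
        t < ∑ i ∈ Finset.range (ℓ + 1), g (ω i x)},
      φ (fun i => ω (i : ℕ) x) ∂μ
      = ∫⁻ x in {x | (∑ i ∈ Finset.range ℓ, g (ω i x)) ≤ t ∧
          t < ∑ i ∈ Finset.range (ℓ + 1), g (ω i x)},
        φ (fun i => ω (ℓ - 1 - (i : ℕ)) x) ∂μ := by
  classical
  have hℓ1 : 1 ≤ ℓ := hk.trans hkl
  have hℓN : ℓ ≤ ℓ + 1 := Nat.le_succ ℓ
  have hkN : k ≤ ℓ + 1 := hkl.trans hℓN
  -- the permutation reversing the first ℓ coordinates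
  have hinv : Function.Involutive
      (fun j : Fin (ℓ + 1) => if h : (j : ℕ) < ℓ then ⟨ℓ - 1 - (j : ℕ), by omega⟩ else j) := by
    intro j
    by_cases h : (j : ℕ) < ℓ
    · have h2 : ℓ - 1 - (j : ℕ) < ℓ := by omega
      simp only [dif_pos h, dif_pos h2]
      ext
      simp only
      omega
    · simp only [dif_neg h]
  set σ : Equiv.Perm (Fin (ℓ + 1)) := Function.Involutive.toPerm _ hinv with hσ
  have hσ_apply : ∀ j : Fin (ℓ + 1), (σ j : ℕ) = if (j : ℕ) < ℓ then ℓ - 1 - (j : ℕ) else j := by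
    intro j
    by_cases h : (j : ℕ) < ℓ
    · simp [hσ, Function.Involutive.toPerm, dif_pos h, if_pos h]
    · simp [hσ, Function.Involutive.toPerm, dif_neg h, if_neg h]
  -- the coordinate-permuting map
  set T : (Fin (ℓ + 1) → E) → (Fin (ℓ + 1) → E) := fun y j => y (σ j) with hT
  have hT_eq : T = ⇑(MeasurableEquiv.piCongrLeft (fun _ : Fin (ℓ + 1) => E) σ.symm) := by
    funext y j
    have := MeasurableEquiv.piCongrLeft_apply_apply (β := fun _ : Fin (ℓ + 1) => E)
      σ.symm y (σ j)
    simpa using this.symm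
  -- the tuple map
  set Ψ : Ω → (Fin (ℓ + 1) → E) := fun x j => ω j x with hΨ
  have hΨm : Measurable Ψ := measurable_pi_lambda _ fun j => hmeas j
  set ν : Measure E := Measure.map (ω 0) μ with hν
  have : IsProbabilityMeasure ν := Measure.isProbabilityMeasure_map (hmeas 0).aemeasurable
  -- joint law is the product measure
  have hmap : Measure.map Ψ μ = Measure.pi (fun _ : Fin (ℓ + 1) => ν) := by
    refine (Measure.pi_eq fun s hs => ?_).symm
    set sets : ℕ → Set E := fun n => if h : n < ℓ + 1 then s ⟨n, h⟩ else Set.univ with hsets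
    have hsets_meas : ∀ n, MeasurableSet (sets n) := by
      intro n
      by_cases h : n < ℓ + 1
      · simpa only [hsets, dif_pos h] using hs ⟨n, h⟩
      · simp [hsets, show ¬ n ≤ ℓ by omega]
    have hpre : Ψ ⁻¹' Set.univ.pi s = ⋂ n ∈ Finset.range (ℓ + 1), ω n ⁻¹' sets n := by
      ext x
      simp only [Set.mem_preimage, Set.mem_pi, Set.mem_univ, true_implies, Set.mem_iInter,
        Finset.mem_range]
      constructor
      · intro h n hn
        simpa [hsets, Nat.lt_succ_iff.mp hn] using h ⟨n, hn⟩
      · intro h j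
        simpa [hsets, j.isLt, Nat.lt_succ_iff.mp j.isLt] using h j j.isLt
    rw [Measure.map_apply hΨm (MeasurableSet.univ_pi fun j => hs j), hpre,
      hindep.measure_inter_preimage_eq_mul (Finset.range (ℓ + 1)) (fun n _ => hsets_meas n)]
    rw [← Fin.prod_univ_eq_prod_range (fun n => μ (ω n ⁻¹' sets n)) (ℓ + 1)]
    refine Finset.prod_congr rfl fun j _ => ?_
    have h1 : sets (j : ℕ) = s j := by simp [hsets, j.isLt, Nat.lt_succ_iff.mp j.isLt]
    rw [h1, show μ (ω (j : ℕ) ⁻¹' s j) = (Measure.map (ω (j : ℕ)) μ) (s j) from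
      (Measure.map_apply (hmeas _) (hs j)).symm, hident j]
  -- the set on the product side
  set S : Set (Fin (ℓ + 1) → E) :=
    {y | (∑ i : Fin ℓ, g (y (Fin.castLE hℓN i))) ≤ t ∧ t < ∑ i : Fin (ℓ + 1), g (y i)} with hS
  have hsum1 : Measurable fun y : Fin (ℓ + 1) → E => ∑ i : Fin ℓ, g (y (Fin.castLE hℓN i)) :=
    Finset.measurable_sum _ fun i _ => hg.comp (measurable_pi_apply _)
  have hsum2 : Measurable fun y : Fin (ℓ + 1) → E => ∑ i : Fin (ℓ + 1), g (y i) :=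
    Finset.measurable_sum _ fun i _ => hg.comp (measurable_pi_apply _)
  have hSmeas : MeasurableSet S := by
    have : S = {y : Fin (ℓ + 1) → E | (∑ i : Fin ℓ, g (y (Fin.castLE hℓN i))) ≤ t} ∩
        {y | t < ∑ i : Fin (ℓ + 1), g (y i)} := by
      ext y; simp [hS, Set.mem_setOf_eq, Set.mem_inter_iff]
    rw [this]
    exact (measurableSet_le hsum1 measurable_const).inter
      (measurableSet_lt measurable_const hsum2)
  -- the event equals the preimage of S
  have hA : {x | (∑ i ∈ Finset.range ℓ, g (ω i x)) ≤ t ∧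
      t < ∑ i ∈ Finset.range (ℓ + 1), g (ω i x)} = Ψ ⁻¹' S := by
    ext x
    simp only [Set.mem_setOf_eq, Set.mem_preimage, hS, hΨ, Fin.coe_castLE]
    rw [Fin.sum_univ_eq_sum_range (fun n => g (ω n x)) ℓ,
      Fin.sum_univ_eq_sum_range (fun n => g (ω n x)) (ℓ + 1)]
  -- the integrands
  set u : (Fin (ℓ + 1) → E) → ℝ≥0∞ := fun y => φ fun i => y (Fin.castLE hkN i) with hu
  have hum : Measurable u := hφ.comp (measurable_pi_lambda _ fun i => measurable_pi_apply _)
  have hL : (fun x => φ fun i : Fin k => ω (i : ℕ) x) = fun x => u (Ψ x) := rfl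
  have hR : (fun x => φ fun i : Fin k => ω (ℓ - 1 - (i : ℕ)) x) = fun x => u (T (Ψ x)) := by
    funext x
    simp only [hu, hT, hΨ]
    congr 1
    funext i
    congr 1
    rw [hσ_apply]
    simp only [Fin.coe_castLE]
    rw [if_pos (lt_of_lt_of_le i.isLt hkl)]
  -- S is invariant under T
  have hTS : ∀ y, T y ∈ S ↔ y ∈ S := by
    intro y
    have e1 : ∑ i : Fin ℓ, g ((T y) (Fin.castLE hℓN i)) = ∑ i : Fin ℓ, g (y (Fin.castLE hℓN i)) := by
      have key : ∀ i : Fin ℓ, σ (Fin.castLE hℓN i) = Fin.castLE hℓN i.rev := by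
        intro i
        ext
        rw [hσ_apply]
        simp [Fin.val_rev, i.isLt]
        omega
      calc ∑ i : Fin ℓ, g (y (σ (Fin.castLE hℓN i)))
          = ∑ i : Fin ℓ, g (y (Fin.castLE hℓN (Fin.revPerm i))) := by
            refine Finset.sum_congr rfl fun i _ => ?_
            rw [key i]; rfl
        _ = ∑ i : Fin ℓ, g (y (Fin.castLE hℓN i)) :=
            Equiv.sum_comp Fin.revPerm (fun i => g (y (Fin.castLE hℓN i)))
    have e2 : ∑ i : Fin (ℓ + 1), g ((T y) i) = ∑ i : Fin (ℓ + 1), g (y i) :=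
      Equiv.sum_comp σ (fun i => g (y i))
    simp only [hS, Set.mem_setOf_eq, e1, e2]
  -- finish
  have hTm : Measurable T := hT_eq ▸ (MeasurableEquiv.measurable _)
  have huT : Measurable fun y => u (T y) := hum.comp hTm
  rw [hA, hL, hR,
    ← setLIntegral_map hSmeas hum hΨm,
    ← setLIntegral_map hSmeas huT hΨm,
    hmap]
  -- now both integrals over (pi ν)
  have hmp : MeasurePreserving T (Measure.pi fun _ : Fin (ℓ + 1) => ν)
      (Measure.pi fun _ : Fin (ℓ + 1) => ν) := by
    rw [hT_eq]
    exact measurePreserving_piCongrLeft (fun _ : Fin (ℓ + 1) => ν) σ.symm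
  rw [← lintegral_indicator hSmeas u, ← lintegral_indicator hSmeas (fun y => u (T y))]
  have : ∀ y, S.indicator (fun y => u (T y)) y = S.indicator u (T y) := by
    intro y
    by_cases h : y ∈ S
    · rw [Set.indicator_of_mem h, Set.indicator_of_mem ((hTS y).mpr h)]
    · rw [Set.indicator_of_notMem h, Set.indicator_of_notMem (fun hc => h ((hTS y).mp hc))]
  simp_rw [this]
  exact (hmp.lintegral_comp (hum.indicator hSmeas)).symm
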